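/- arXiv:1512.07846 — 2 statements merged into one kernel-verified Lean document; each statement's English description precedes it below -/
import Mathlib

section
/- For any subspaces H₁, H₂, H₃ of E, the identity Π(H₁)·Π(H₃)·Π(H₂) − Π(H₁⊓H₂⊓H₃) = Π(H₁)·𝔇(H₁,H₂,H₃)·Π(H₂) holds, where the products are compositions of operators. -/
variable {E : Type*} [NormedAddCommGroup E] [InnerProductSpace ℂ E] [FiniteDimensional ℂ E]

/-- The orthogonal projection onto a subspace `K`, regarded as an operator on `E`. -/
noncomputable def proj (K : Submodule ℂ E) : E →L[ℂ] E :=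
  K.subtypeL.comp (K.orthogonalProjectionOnto)

/-- The Möbius (non-additivity) operator `𝔇(H₁,H₂)`. -/
noncomputable def MobD (H₁ H₂ : Submodule ℂ E) : E →L[ℂ] E :=
  proj (H₁ ⊔ H₂) + proj (H₁ ⊓ H₂) - proj H₁ - proj H₂

/-- The three-subspace Möbius operator `𝔇(H₁,H₂,H₃)`. -/
noncomputable def MobD₃ (H₁ H₂ H₃ : Submodule ℂ E) : E →L[ℂ] E :=
  proj (H₁ ⊔ H₂ ⊔ H₃) - proj (H₁ ⊔ H₂) - proj (H₁ ⊔ H₃) - proj (H₂ ⊔ H₃)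
    + proj H₁ + proj H₂ + proj H₃ - proj (H₁ ⊓ H₂ ⊓ H₃)

/-- The dual three-subspace Möbius operator `𝔇̃(H₁,H₂,H₃)`. -/
noncomputable def MobDt₃ (H₁ H₂ H₃ : Submodule ℂ E) : E →L[ℂ] E :=
  proj (H₁ ⊓ H₂ ⊓ H₃) - proj (H₁ ⊓ H₂) - proj (H₁ ⊓ H₃) - proj (H₂ ⊓ H₃)
    + proj H₁ + proj H₂ + proj H₃ - proj (H₁ ⊔ H₂ ⊔ H₃)

lemma proj_mul_proj_of_le {H K : Submodule ℂ E} (h : H ≤ K) :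
    proj H * proj K = proj H := by
  ext x
  simp only [proj, ContinuousLinearMap.mul_apply, ContinuousLinearMap.coe_comp', Function.comp_apply,
    Submodule.coe_subtypeL', Submodule.coe_subtype]
  exact congrArg _ (Submodule.orthogonalProjectionOnto_starProjection_of_le h x)

lemma mul_proj_of_le {H K : Submodule ℂ E} (h : H ≤ K) :
    proj K * proj H = proj H := by
  ext x
  simp only [proj, ContinuousLinearMap.mul_apply, ContinuousLinearMap.coe_comp', Function.comp_apply,
    Submodule.coe_subtypeL', Submodule.coe_subtype]
  exact congrArg Subtype.val (Submodule.orthogonalProjectionOnto_mem_subspace_eq_self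
    (⟨_, h (H.orthogonalProjectionOnto x).2⟩ : K))

theorem proj_mul_proj_mul_proj (H₁ H₂ H₃ : Submodule ℂ E) :
    proj H₁ * proj H₃ * proj H₂ - proj (H₁ ⊓ H₂ ⊓ H₃) =
      proj H₁ * MobD₃ H₁ H₂ H₃ * proj H₂ := by
  have h11 : proj H₁ * proj H₁ = proj H₁ := proj_mul_proj_of_le le_rfl
  have h123 : proj H₁ * proj (H₁ ⊔ H₂ ⊔ H₃) = proj H₁ :=
    proj_mul_proj_of_le (le_sup_left.trans le_sup_left)
  have h12 : proj H₁ * proj (H₁ ⊔ H₂) = proj H₁ := proj_mul_proj_of_le le_sup_left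
  have h13 : proj H₁ * proj (H₁ ⊔ H₃) = proj H₁ := proj_mul_proj_of_le le_sup_left
  have h23 : proj (H₂ ⊔ H₃) * proj H₂ = proj H₂ := mul_proj_of_le le_sup_left
  have h1m : proj H₁ * proj (H₁ ⊓ H₂ ⊓ H₃) = proj (H₁ ⊓ H₂ ⊓ H₃) :=
    mul_proj_of_le (inf_le_left.trans inf_le_left)
  have h2m : proj (H₁ ⊓ H₂ ⊓ H₃) * proj H₂ = proj (H₁ ⊓ H₂ ⊓ H₃) :=
    proj_mul_proj_of_le (inf_le_left.trans inf_le_right)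
  simp only [MobD₃, mul_sub, mul_add, sub_mul, add_mul, h11, h123, h12, h13, h1m]
  have h22 : proj H₂ * proj H₂ = proj H₂ := proj_mul_proj_of_le le_rfl
  rw [mul_assoc (proj H₁) (proj (H₂ ⊔ H₃)), h23, h2m, mul_assoc (proj H₁) (proj H₂), h22]
  abel
end

section
/- Let H₁, H₂, h be subspaces of E with H₁⊓H₂ ⊆ h ⊆ H₁. Then 𝔇(H₂,h) + 𝔇(h⊔H₂, H₁) = 𝔇(H₂,H₁). -/
variable {E : Type*} [NormedAddCommGroup E] [InnerProductSpace ℂ E] [FiniteDimensional ℂ E]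

theorem mobD_add_mobD_of_mem_interval (H₁ H₂ h : Submodule ℂ E)
    (h₁ : H₁ ⊓ H₂ ≤ h) (h₂ : h ≤ H₁) :
    MobD H₂ h + MobD (h ⊔ H₂) H₁ = MobD H₂ H₁ := by
  have e1 : (H₂ ⊔ h) ⊔ H₁ = H₂ ⊔ H₁ := by
    rw [sup_assoc, sup_eq_right.2 h₂]
  have e2 : H₂ ⊓ h = H₂ ⊓ H₁ := by
    apply le_antisymm
    · exact le_inf inf_le_left (le_trans inf_le_right h₂)
    · exact le_inf inf_le_left (le_trans (by rw [inf_comm]; exact h₁) le_rfl)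
  have e3 : (H₂ ⊔ h) ⊓ H₁ = h := by
    rw [sup_comm, sup_inf_assoc_of_le _ h₂]
    exact sup_eq_left.2 (le_trans (by rw [inf_comm]; exact h₁) le_rfl)
  simp only [MobD, sup_comm h H₂, e1, e2, e3]
  abel
end
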